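/- Under the backward recursion g_N(x) = f'(x)/(R + f''(x)), g_l(x) = (f'(x) + R·g_{l+1}(x))/(R + f''(x)), with f three times differentiable, R > 0, f'(x*) = 0 and f''(x*) > 0, the derivative at x* satisfies g_i'(x*) = 1 − (R/(R + f''(x*)))^{N+1−i} for every i = 0, 1, ..., N. -/

import Mathlib

/-- g_i'(x*) = 1 − (R/(R + f''(x*)))^(N+1−i). -/
theorem stmt1 (f : ℝ → ℝ) (hf : ContDiff ℝ 3 f) (R : ℝ) (hR : 0 < R) (N : ℕ)
    (g : ℕ → ℝ → ℝ)
    (hgN : ∀ x : ℝ, g N x = deriv f x / (R + deriv (deriv f) x))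
    (hrec : ∀ l < N, ∀ x : ℝ,
      g l x = (deriv f x + R * g (l + 1) x) / (R + deriv (deriv f) x))
    (xs : ℝ) (hxs : deriv f xs = 0) (hf2 : 0 < deriv (deriv f) xs) :
    ∀ i ≤ N, deriv (g i) xs = 1 - (R / (R + deriv (deriv f) xs)) ^ (N + 1 - i) := by
  -- closed form
  have key : ∀ d : ℕ, ∀ l : ℕ, l + d = N → ∀ x : ℝ,
      g l x = deriv f x * ∑ k ∈ Finset.range (d + 1),
        R ^ k / (R + deriv (deriv f) x) ^ (k + 1) := by
    intro d
    induction d with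
    | zero =>
      intro l hl x
      simp at hl
      subst hl
      rw [hgN x]
      simp [div_eq_mul_inv]
    | succ d ih =>
      intro l hl x
      have hlN : l < N := by omega
      have hl1 : (l + 1) + d = N := by omega
      rw [hrec l hlN x, ih (l + 1) hl1 x]
      set D := R + deriv (deriv f) x with hD
      set a := deriv f x with ha
      conv_rhs => rw [Finset.sum_range_succ']
      have hterm : ∀ k : ℕ, R ^ (k + 1) / D ^ (k + 1 + 1)
          = (R ^ k / D ^ (k + 1)) * (R / D) := by
        intro k
        rw [pow_succ R, pow_succ D, mul_div_mul_comm]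
      simp only [hterm]
      rw [← Finset.sum_mul]
      set S := ∑ k ∈ Finset.range (d + 1), R ^ k / D ^ (k + 1) with hS
      simp only [pow_zero, zero_add, pow_one]
      ring
  intro i hi
  set c := deriv (deriv f) xs with hc
  have hD : (0:ℝ) < R + c := by linarith
  have hDne : R + c ≠ 0 := ne_of_gt hD
  -- differentiability facts
  have hf' : ContDiff ℝ 3 f := hf
  rw [show (3 : WithTop ℕ∞) = 2 + 1 from by norm_num] at hf'
  obtain ⟨-, -, h2⟩ := contDiff_succ_iff_deriv.mp hf'
  rw [show (2 : WithTop ℕ∞) = 1 + 1 from by norm_num] at h2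
  obtain ⟨hdf, -, h1⟩ := contDiff_succ_iff_deriv.mp h2
  have hddf : Differentiable ℝ (deriv (deriv f)) := h1.differentiable one_ne_zero
  have hS : DifferentiableAt ℝ
      (fun x => ∑ k ∈ Finset.range (N - i + 1),
        R ^ k / (R + deriv (deriv f) x) ^ (k + 1)) xs := by
    apply DifferentiableAt.fun_sum
    intro k _
    apply DifferentiableAt.div (differentiableAt_const _)
    · exact ((differentiableAt_const R).add (hddf xs)).pow _
    · exact pow_ne_zero _ hDne
  have hgi : g i = fun x => deriv f x * ∑ k ∈ Finset.range (N - i + 1),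
      R ^ k / (R + deriv (deriv f) x) ^ (k + 1) := by
    funext x
    exact key (N - i) i (by omega) x
  rw [hgi, deriv_fun_mul (hdf xs) hS, hxs]
  simp only [zero_mul, add_zero, mul_zero]
  rw [← hc]
  -- geometric sum identity
  have geom : ∀ m : ℕ, deriv (deriv f) xs * ∑ k ∈ Finset.range (m + 1),
      R ^ k / (R + c) ^ (k + 1) = 1 - (R / (R + c)) ^ (m + 1) := by
    intro m
    induction m with
    | zero =>
      simp only [Finset.range_one, Finset.sum_singleton, pow_zero, pow_one, zero_add]
      rw [← hc]
      field_simp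
      ring
    | succ m ih =>
      rw [Finset.sum_range_succ, mul_add, ih]
      rw [← hc]
      rw [div_pow, div_pow]
      field_simp
      ring
  have hNi : N + 1 - i = (N - i) + 1 := by omega
  rw [hNi]
  exact geom (N - i)
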